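/- The class of languages accepted by quasi-deterministic simple (qDS) sensing 5'→3' WK automata properly includes the class of languages accepted by quasi-deterministic all-final simple (qDFS) sensing 5'→3' WK automata: the language b*ab* = { bⁱabʲ : i,j ≥ 0 } is accepted by a quasi-deterministic 1-limited (hence simple) sensing 5'→3' WK automaton, but by no quasi-deterministic all-final sensing 5'→3' WK automaton. -/

import Mathlib

open Computability

/-- The two-letter alphabet `{a, b}`. -/
inductive Letter : Type
  | a : Letter
  | b : Letter
deriving DecidableEq

instance : Fintype Letter :=
  ⟨{Letter.a, Letter.b}, fun x => by cases x <;> simp⟩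

open Letter

/-- A sensing 5'→3' Watson-Crick automaton over the alphabet `T` with state set `Q`:
an initial state `q0`, a set `F` of final states, and a transition mapping
`δ : Q × T* × T* → 2^Q` that is nonempty for only finitely many triples. -/
structure WKAutomaton (T : Type) (Q : Type) where
  q0 : Q
  F : Set Q
  δ : Q → List T → List T → Set Q
  finite_delta : {t : Q × List T × List T | (δ t.1 t.2.1 t.2.2).Nonempty}.Finite

namespace WKAutomaton

variable {T Q : Type}

/-- One computation step on configurations:
`(q, x ++ w' ++ y) ⇒ (q', w')` iff `q' ∈ δ q x y`. -/
def Step (A : WKAutomaton T Q) (c c' : Q × List T) : Prop :=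
  ∃ x y : List T, c.2 = x ++ c'.2 ++ y ∧ c'.1 ∈ A.δ c.1 x y

/-- The accepted language: words `w` with `(q₀, w) ⇒* (q_F, λ)` for some final `q_F`. -/
def Lang (A : WKAutomaton T Q) : Set (List T) :=
  {w | ∃ qf ∈ A.F, Relation.ReflTransGen A.Step (A.q0, w) (qf, [])}

/-- `A` is deterministic: in every configuration at most one computation step
(choice of `x`, `y`, `w'`, `q'`) is applicable. -/
def Deterministic (A : WKAutomaton T Q) : Prop :=
  ∀ (q : Q) (w x₁ y₁ w₁ x₂ y₂ w₂ : List T) (q₁ q₂ : Q),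
    w = x₁ ++ w₁ ++ y₁ → q₁ ∈ A.δ q x₁ y₁ →
    w = x₂ ++ w₂ ++ y₂ → q₂ ∈ A.δ q x₂ y₂ →
    x₁ = x₂ ∧ y₁ = y₂ ∧ w₁ = w₂ ∧ q₁ = q₂

/-- `A` is quasi-deterministic: for every configuration `(q,w)`, whenever
`(q,w) ⇒ (p,u)` and `(q,w) ⇒ (r,v)`, it holds that `p = r`. -/
def QuasiDet (A : WKAutomaton T Q) : Prop :=
  ∀ (q : Q) (w : List T) (p r : Q) (u v : List T),
    A.Step (q, w) (p, u) → A.Step (q, w) (r, v) → p = r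

/-- `A` is state-deterministic: for every state `q` there is at most one state `p`
with `p ∈ δ(q,u,v)` for some words `u`, `v`. -/
def StateDet (A : WKAutomaton T Q) : Prop :=
  ∀ (q p₁ p₂ : Q) (u₁ v₁ u₂ v₂ : List T),
    p₁ ∈ A.δ q u₁ v₁ → p₂ ∈ A.δ q u₂ v₂ → p₁ = p₂

/-- `A` is stateless: `Q = F = {q₀}`. -/
def Stateless (A : WKAutomaton T Q) : Prop :=
  (∀ q : Q, q = A.q0) ∧ A.F = {A.q0}

/-- `A` is all-final: `Q = F`. -/
def AllFinal (A : WKAutomaton T Q) : Prop := A.F = Set.univ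

/-- `A` is simple: at most one head reads in each step. -/
def Simple (A : WKAutomaton T Q) : Prop :=
  ∀ (q : Q) (u v : List T), (A.δ q u v).Nonempty → u = [] ∨ v = []

/-- `A` is 1-limited: exactly one letter is read in each step. -/
def OneLimited (A : WKAutomaton T Q) : Prop :=
  ∀ (q : Q) (u v : List T), (A.δ q u v).Nonempty →
    (u = [] ∧ v.length = 1) ∨ (u.length = 1 ∧ v = [])

end WKAutomaton

/-- Equality of languages modulo the empty word. -/
def EqModLambda {T : Type} (L₁ L₂ : Set (List T)) : Prop :=
  ∀ w : List T, w ≠ [] → (w ∈ L₁ ↔ w ∈ L₂)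

/-- `L` is accepted (modulo the empty word) by some sensing 5'→3' WK automaton
with a finite state set satisfying the property `P`. -/
def AcceptsWith (T : Type) (P : ∀ Q : Type, WKAutomaton T Q → Prop)
    (L : Set (List T)) : Prop :=
  ∃ (Q : Type) (_ : Finite Q) (A : WKAutomaton T Q), P Q A ∧ EqModLambda A.Lang L

/-- The language `b*ab*`. -/
def Lbab : Set (List Letter) :=
  {w | ∃ i j : ℕ, w = List.replicate i b ++ a :: List.replicate j b}


section AuxProof

open Letter

/-- Transition function of the witness automaton for `b*ab*`. -/
def Mdelta : Bool → List Letter → List Letter → Set Bool := fun q x y =>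
  {p | (q = false ∧ x = [Letter.b] ∧ y = [] ∧ p = false) ∨
       (q = false ∧ x = [Letter.a] ∧ y = [] ∧ p = true) ∨
       (q = true ∧ x = [Letter.b] ∧ y = [] ∧ p = true)}

lemma Mdelta_cases {q p : Bool} {x y : List Letter} (h : p ∈ Mdelta q x y) :
    (q = false ∧ x = [Letter.b] ∧ y = [] ∧ p = false) ∨
    (q = false ∧ x = [Letter.a] ∧ y = [] ∧ p = true) ∨
    (q = true ∧ x = [Letter.b] ∧ y = [] ∧ p = true) := h

/-- The witness quasi-deterministic 1-limited automaton for `b*ab*`. -/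
def Mwk : WKAutomaton Letter Bool where
  q0 := false
  F := {true}
  δ := Mdelta
  finite_delta := by
    have hfin : ({((false : Bool), ([Letter.b], ([] : List Letter))),
        ((false : Bool), ([Letter.a], ([] : List Letter))),
        ((true : Bool), ([Letter.b], ([] : List Letter)))} :
        Set (Bool × List Letter × List Letter)).Finite :=
      ((Set.finite_singleton _).insert _).insert _
    apply hfin.subset
    rintro ⟨q, x, y⟩ ⟨p, hp⟩
    rcases Mdelta_cases hp with ⟨rfl, rfl, rfl, rfl⟩ | ⟨rfl, rfl, rfl, rfl⟩ | ⟨rfl, rfl, rfl, rfl⟩ <;>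
      simp

lemma Mwk_delta : Mwk.δ = Mdelta := rfl

lemma Mwk_qd : Mwk.QuasiDet := by
  intro q w p r u v hs1 hs2
  obtain ⟨x1, y1, e1, m1⟩ := hs1
  obtain ⟨x2, y2, e2, m2⟩ := hs2
  rw [Mwk_delta] at m1 m2
  rcases Mdelta_cases m1 with ⟨rfl, rfl, rfl, rfl⟩ | ⟨rfl, rfl, rfl, rfl⟩ | ⟨rfl, rfl, rfl, rfl⟩ <;>
    rcases Mdelta_cases m2 with ⟨hq, rfl, rfl, rfl⟩ | ⟨hq, rfl, rfl, rfl⟩ | ⟨hq, rfl, rfl, rfl⟩ <;>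
    simp_all

lemma Mwk_1lim : Mwk.OneLimited := by
  intro q u v ⟨p, hp⟩
  rw [Mwk_delta] at hp
  rcases Mdelta_cases hp with ⟨rfl, rfl, rfl, rfl⟩ | ⟨rfl, rfl, rfl, rfl⟩ | ⟨rfl, rfl, rfl, rfl⟩ <;>
    exact Or.inr ⟨rfl, rfl⟩

lemma Mwk_fwd : ∀ c : Bool × List Letter,
    Relation.ReflTransGen Mwk.Step c (true, ([] : List Letter)) →
    (c.1 = true → ∃ j, c.2 = List.replicate j Letter.b) ∧ (c.1 = false → c.2 ∈ Lbab) := by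
  intro c h
  induction h using Relation.ReflTransGen.head_induction_on with
  | refl =>
    exact ⟨fun _ => ⟨0, rfl⟩, fun hf => by simp at hf⟩
  | head step rest ih =>
    obtain ⟨x, y, e, m⟩ := step
    rw [Mwk_delta] at m
    rcases Mdelta_cases m with ⟨hq, rfl, rfl, hp⟩ | ⟨hq, rfl, rfl, hp⟩ | ⟨hq, rfl, rfl, hp⟩
    · obtain ⟨i, j, hu⟩ := ih.2 hp
      refine ⟨fun ht => by rw [hq] at ht; simp at ht, fun _ => ⟨i + 1, j, ?_⟩⟩
      rw [e, hu]
      simp [List.replicate_succ]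
    · obtain ⟨j, hu⟩ := ih.1 hp
      refine ⟨fun ht => by rw [hq] at ht; simp at ht, fun _ => ⟨0, j, ?_⟩⟩
      rw [e, hu]
      simp
    · obtain ⟨j, hu⟩ := ih.1 hp
      refine ⟨fun _ => ⟨j + 1, ?_⟩, fun hf => by rw [hq] at hf; simp at hf⟩
      rw [e, hu]
      simp [List.replicate_succ]

lemma Mwk_bsteps (j : ℕ) (q : Bool) (hq : q ∈ Mwk.δ q [Letter.b] []) (t : List Letter) :
    Relation.ReflTransGen Mwk.Step (q, List.replicate j Letter.b ++ t) (q, t) := by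
  induction j with
  | zero => simpa using Relation.ReflTransGen.refl
  | succ n ih =>
    refine Relation.ReflTransGen.head ⟨[Letter.b], [], ?_, hq⟩ ih
    simp [List.replicate_succ]

lemma Mwk_lang : EqModLambda Mwk.Lang Lbab := by
  intro w _
  constructor
  · rintro ⟨qf, hqf, h⟩
    have hqf' : qf = true := hqf
    rw [hqf'] at h
    exact (Mwk_fwd (Mwk.q0, w) h).2 rfl
  · rintro ⟨i, j, rfl⟩
    refine ⟨true, rfl, ?_⟩
    have hfb : false ∈ Mwk.δ false [Letter.b] [] := Or.inl ⟨rfl, rfl, rfl, rfl⟩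
    have htb : true ∈ Mwk.δ true [Letter.b] [] := Or.inr (Or.inr ⟨rfl, rfl, rfl, rfl⟩)
    have hab : true ∈ Mwk.δ false [Letter.a] [] := Or.inr (Or.inl ⟨rfl, rfl, rfl, rfl⟩)
    have h1 := Mwk_bsteps i false hfb (Letter.a :: List.replicate j Letter.b)
    have h2 : Mwk.Step (false, Letter.a :: List.replicate j Letter.b)
        (true, List.replicate j Letter.b) := ⟨[Letter.a], [], by simp, hab⟩
    have h3 := Mwk_bsteps j true htb []
    exact h1.trans (Relation.ReflTransGen.head h2 (by simpa using h3))

/-- A short prefix of `b^N a b^N` (length at most `N`) contains no `a`. -/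
lemma a_not_mem_short_prefix {z r : List Letter} {N : ℕ}
    (e : z ++ r = List.replicate N Letter.b ++ Letter.a :: List.replicate N Letter.b)
    (hlen : z.length ≤ N) : Letter.a ∉ z := by
  intro ha
  have h1 : z = List.take z.length (z ++ r) := List.take_left.symm
  rw [e] at h1
  rw [List.take_append_of_le_length (by simpa using hlen), List.take_replicate] at h1
  rw [h1] at ha
  exact Letter.noConfusion (List.eq_of_mem_replicate ha)

lemma no_allfinal : ¬ AcceptsWith Letter (fun _ A => A.QuasiDet ∧ A.AllFinal) Lbab := by
  rintro ⟨Q, _, A, ⟨-, hAF⟩, heq⟩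
  obtain ⟨K, hK⟩ : ∃ K, ∀ q x y, (A.δ q x y).Nonempty → x.length + y.length ≤ K := by
    obtain ⟨K, hK⟩ :=
      (A.finite_delta.image (fun t => t.2.1.length + t.2.2.length)).bddAbove
    exact ⟨K, fun q x y h => hK ⟨(q, x, y), h, rfl⟩⟩
  -- no nonempty pure-b word is accepted
  have hb : ∀ m : ℕ, List.replicate m Letter.b ∈ A.Lang → m = 0 := by
    intro m hm
    by_contra hm0
    have hne : List.replicate m Letter.b ≠ [] := by
      intro h
      exact hm0 (by simpa using congrArg List.length h)
    obtain ⟨i, j, hij⟩ := (heq _ hne).1 hm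
    have hmem : Letter.a ∈ List.replicate m Letter.b := by rw [hij]; simp
    exact Letter.noConfusion (List.eq_of_mem_replicate hmem)
  set N := K + 1 with hN
  have hw_lang : (List.replicate N Letter.b ++ Letter.a :: List.replicate N Letter.b) ∈ A.Lang := by
    have hwne : (List.replicate N Letter.b ++ Letter.a :: List.replicate N Letter.b) ≠ [] := by
      simp
    exact (heq _ hwne).2 ⟨N, N, rfl⟩
  obtain ⟨qf, _, hcomp⟩ := hw_lang
  have inv : ∀ c : Q × List Letter,
      Relation.ReflTransGen A.Step
        (A.q0, List.replicate N Letter.b ++ Letter.a :: List.replicate N Letter.b) c →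
      c.2 = List.replicate N Letter.b ++ Letter.a :: List.replicate N Letter.b ∧
        ∀ v : List Letter, Relation.ReflTransGen A.Step (A.q0, v) (c.1, v) := by
    intro c h
    induction h with
    | refl => exact ⟨rfl, fun _ => Relation.ReflTransGen.refl⟩
    | tail _ step ih =>
      rename_i cprev cnew hrtg
      obtain ⟨hprev, hlam⟩ := ih
      obtain ⟨x, y, e, m⟩ := step
      rw [hprev] at e
      have hKxy : x.length + y.length ≤ K := hK _ x y ⟨cnew.1, m⟩
      by_cases hau : Letter.a ∈ cnew.2
      · -- x and y are pure b; replaying on x ++ y forces them empty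
        have hcnt : List.count Letter.a
            (List.replicate N Letter.b ++ Letter.a :: List.replicate N Letter.b) = 1 := by
          simp [List.count_append, List.count_replicate, List.count_cons]
        rw [e] at hcnt
        simp only [List.count_append] at hcnt
        have hcu : 0 < List.count Letter.a cnew.2 := List.count_pos_iff.mpr hau
        have hcx : List.count Letter.a x = 0 := by omega
        have hcy : List.count Letter.a y = 0 := by omega
        have hax : Letter.a ∉ x := List.count_eq_zero.mp hcx
        have hay : Letter.a ∉ y := List.count_eq_zero.mp hcy
        have hx : x = List.replicate x.length Letter.b :=
          List.eq_replicate_of_mem (fun t ht => by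
            cases t with
            | a => exact absurd ht hax
            | b => rfl)
        have hy : y = List.replicate y.length Letter.b :=
          List.eq_replicate_of_mem (fun t ht => by
            cases t with
            | a => exact absurd ht hay
            | b => rfl)
        have hstep : A.Step (cprev.1, x ++ y) (cnew.1, []) := ⟨x, y, by simp, m⟩
        have hmemL : x ++ y ∈ A.Lang :=
          ⟨cnew.1, by rw [hAF]; trivial, (hlam (x ++ y)).tail hstep⟩
        rw [hx, hy, ← List.replicate_add] at hmemL
        have h0 := hb _ hmemL
        have hx0 : x = [] := List.length_eq_zero_iff.mp (by omega)
        have hy0 : y = [] := List.length_eq_zero_iff.mp (by omega)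
        subst hx0; subst hy0
        simp only [List.nil_append, List.append_nil] at e
        refine ⟨e.symm, fun v => (hlam v).tail ⟨[], [], by simp, m⟩⟩
      · -- the `a` would have to be read, but it is too deep
        exfalso
        have haw : Letter.a ∈ x ++ cnew.2 ++ y := by
          rw [← e]; simp
        rcases List.mem_append.mp haw with haw' | hay
        · rcases List.mem_append.mp haw' with hax | hau'
          · have e' : x ++ (cnew.2 ++ y) =
                List.replicate N Letter.b ++ Letter.a :: List.replicate N Letter.b := by
              simpa [List.append_assoc] using e.symm
            exact a_not_mem_short_prefix e' (by omega) hax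
          · exact hau hau'
        · have e2 : (x ++ cnew.2 ++ y).reverse =
              List.replicate N Letter.b ++ Letter.a :: List.replicate N Letter.b := by
            rw [← e]
            simp [List.reverse_append, List.reverse_replicate, List.append_assoc]
          have e3 : y.reverse ++ (cnew.2.reverse ++ x.reverse) =
              List.replicate N Letter.b ++ Letter.a :: List.replicate N Letter.b := by
            simpa [List.reverse_append] using e2
          exact a_not_mem_short_prefix e3 (by simp; omega) (List.mem_reverse.mpr hay)
  have hfin := (inv (qf, []) hcomp).1
  simp at hfin

end AuxProof

/-- The class of languages accepted by quasi-deterministic simple (qDS) sensing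
5'→3' WK automata properly includes the class of languages accepted by
quasi-deterministic all-final simple (qDFS) sensing 5'→3' WK automata: every
qDFS automaton is a qDS automaton (and every 1-limited automaton is simple),
and `b*ab*` is accepted by a quasi-deterministic 1-limited (hence simple)
sensing 5'→3' WK automaton, but by no quasi-deterministic all-final sensing
5'→3' WK automaton. -/
theorem qDFS_proper_subset_qDS :
    (∀ (T Q : Type) (A : WKAutomaton T Q), A.OneLimited → A.Simple) ∧
    (∀ (T : Type) (L : Set (List T)),
      AcceptsWith T (fun _ A => A.QuasiDet ∧ A.AllFinal ∧ A.Simple) L →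
      AcceptsWith T (fun _ A => A.QuasiDet ∧ A.Simple) L) ∧
    AcceptsWith Letter (fun _ A => A.QuasiDet ∧ A.OneLimited) Lbab ∧
    ¬ AcceptsWith Letter (fun _ A => A.QuasiDet ∧ A.AllFinal) Lbab := by
  refine ⟨?_, ?_, ?_, no_allfinal⟩
  · intro T Q A h q u v hne
    rcases h q u v hne with ⟨h1, _⟩ | ⟨_, h2⟩
    · exact Or.inl h1
    · exact Or.inr h2
  · rintro T L ⟨Q, fin, A, ⟨hqd, _, hs⟩, heq⟩
    exact ⟨Q, fin, A, ⟨hqd, hs⟩, heq⟩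
  · exact ⟨Bool, inferInstance, Mwk, ⟨Mwk_qd, Mwk_1lim⟩, Mwk_lang⟩
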